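/- For u_L ∈ [0,1], u_R = 1-u_L, q ∈ [0,1], margin m = |u_L - 1/2|, wrong-action mass w (= 1-q if u_L ≥ 1/2, else q), and normalized regret δ = 1 - (q·u_L + (1-q)·(1-u_L))/max{u_L, 1-u_L}: if m ≥ γ for some γ ∈ (0, 1/2], then w ≤ δ·(1+2γ)/(4γ). -/

import Mathlib

/-- Betting-case regret bound: if the margin is at least γ then the wrong-action
mass is bounded by δ·(1+2γ)/(4γ). -/
theorem stmt_2 (uL q γ : ℝ)
    (huL : uL ∈ Set.Icc (0:ℝ) 1) (hq : q ∈ Set.Icc (0:ℝ) 1)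
    (hγ : γ ∈ Set.Ioc (0:ℝ) (1/2))
    (m δ w : ℝ)
    (hm : m = |uL - 1/2|)
    (hδ : δ = 1 - (q * uL + (1 - q) * (1 - uL)) / max uL (1 - uL))
    (hw : w = if (1:ℝ)/2 ≤ uL then 1 - q else q)
    (hmγ : γ ≤ m) :
    w ≤ δ * (1 + 2 * γ) / (4 * γ) := by
  obtain ⟨hu0, hu1⟩ := huL
  obtain ⟨hq0, hq1⟩ := hq
  obtain ⟨hγ0, hγ1⟩ := hγ
  rw [le_div_iff₀ (by linarith : (0:ℝ) < 4 * γ)]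
  by_cases h : (1:ℝ)/2 ≤ uL
  · rw [if_pos h] at hw
    have hmax : max uL (1 - uL) = uL := max_eq_left (by linarith)
    have habs : |uL - 1/2| = uL - 1/2 := abs_of_nonneg (by linarith)
    have huLpos : (0:ℝ) < uL := by linarith
    rw [hmax] at hδ
    have hδ' : δ * uL = (2 * uL - 1) * (1 - q) := by
      rw [hδ, sub_mul, div_mul_cancel₀ _ huLpos.ne']; ring
    have hγm : γ ≤ uL - 1/2 := by rw [hm, habs] at hmγ; exact hmγ
    have hδ0 : 0 ≤ δ := by nlinarith
    nlinarith [mul_nonneg hδ0 (by linarith : (0:ℝ) ≤ uL - 1/2 - γ),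
      mul_nonneg (by linarith : (0:ℝ) ≤ 1 - q) (by linarith : (0:ℝ) ≤ uL - 1/2 - γ)]
  · rw [if_neg h] at hw
    push_neg at h
    have hmax : max uL (1 - uL) = 1 - uL := max_eq_right (by linarith)
    have habs : |uL - 1/2| = 1/2 - uL := by
      rw [abs_of_nonpos (by linarith)]; ring
    have huLpos : (0:ℝ) < 1 - uL := by linarith
    rw [hmax] at hδ
    have hδ' : δ * (1 - uL) = (1 - 2 * uL) * q := by
      rw [hδ, sub_mul, div_mul_cancel₀ _ huLpos.ne']; ring
    have hγm : γ ≤ 1/2 - uL := by rw [hm, habs] at hmγ; exact hmγ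
    have hδ0 : 0 ≤ δ := by nlinarith
    nlinarith [mul_nonneg hδ0 (by linarith : (0:ℝ) ≤ 1/2 - uL - γ),
      mul_nonneg hq0 (by linarith : (0:ℝ) ≤ 1/2 - uL - γ)]
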